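/- Let H be a real Hilbert space and K : H → H a compact self-adjoint linear operator. Define the energy E(x) = ⟨x,x⟩ and the helicity 𝓗(x) = ⟨x, K x⟩. Then for every h ∈ ℝ for which the constraint set {x ∈ H : 𝓗(x) = h} is nonempty, the minimisation problem E(x) → min subject to 𝓗(x) = h admits a global minimiser. -/

import Mathlib

open RealInnerProductSpace

-- generalized Cauchy-Schwarz for a positive symmetric operator
lemma gen_cs {H : Type*} [NormedAddCommGroup H] [InnerProductSpace ℝ H]
    (S : H →L[ℝ] H) (hsym : ∀ x y : H, ⟪S x, y⟫ = ⟪x, S y⟫)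
    (hpos : ∀ x : H, 0 ≤ ⟪x, S x⟫) (x y : H) :
    ⟪x, S y⟫ ^ 2 ≤ ⟪x, S x⟫ * ⟪y, S y⟫ := by
  have key : ∀ t : ℝ, 0 ≤ ⟪y, S y⟫ * (t * t) + (2 * ⟪x, S y⟫) * t + ⟪x, S x⟫ := by
    intro t
    have h := hpos (x + t • y)
    have e1 : ⟪y, S x⟫ = ⟪x, S y⟫ := by rw [← hsym y x, real_inner_comm]
    simp only [map_add, map_smul, inner_add_left, inner_add_right,
      real_inner_smul_left, real_inner_smul_right] at h
    rw [e1] at h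
    nlinarith [h]
  have hd := discrim_le_zero key
  rw [discrim] at hd
  nlinarith [hd]

lemma aux_pos {H : Type*} [NormedAddCommGroup H] [InnerProductSpace ℝ H]
    [CompleteSpace H] (K : H →L[ℝ] H) (hK : IsSelfAdjoint K) (hKc : IsCompactOperator K)
    (h : ℝ) (hpos : 0 < h) (hne : ∃ x : H, ⟪x, K x⟫ = h) :
    ∃ x₀ : H, ⟪x₀, K x₀⟫ = h ∧ ∀ y : H, ⟪y, K y⟫ = h → ‖x₀‖ ^ 2 ≤ ‖y‖ ^ 2 := by
  obtain ⟨w, hw⟩ := hne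
  have hsymK : ∀ x y : H, ⟪K x, y⟫ = ⟪x, K y⟫ := fun x y => hK.isSymmetric x y
  have hw0 : w ≠ 0 := by
    rintro rfl
    rw [inner_zero_left] at hw
    exact hpos.ne' hw.symm
  have hwn : (0:ℝ) < ‖w‖ := norm_pos_iff.mpr hw0
  set A : Set ℝ := (fun x : H => ⟪x, K x⟫) '' {x : H | ‖x‖ = 1} with hA
  have hmemA : ∀ x : H, ‖x‖ = 1 → ⟪x, K x⟫ ∈ A := fun x hx => ⟨x, hx, rfl⟩
  have hwhat : ⟪(‖w‖⁻¹ • w), K (‖w‖⁻¹ • w)⟫ = h / ‖w‖ ^ 2 := by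
    rw [map_smul, real_inner_smul_left, real_inner_smul_right, hw, pow_two,
      ← div_div, div_eq_mul_inv, div_eq_mul_inv]
    ring
  have hAne : A.Nonempty := ⟨_, hmemA (‖w‖⁻¹ • w) (by
    rw [norm_smul]; simp [abs_of_pos (inv_pos.mpr hwn), inv_mul_cancel₀ hwn.ne'])⟩
  have hAbdd : BddAbove A := by
    refine ⟨‖K‖, ?_⟩
    rintro r ⟨x, hx, rfl⟩
    calc ⟪x, K x⟫ ≤ ‖x‖ * ‖K x‖ := real_inner_le_norm x (K x)
    _ ≤ ‖x‖ * (‖K‖ * ‖x‖) := by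
        exact mul_le_mul_of_nonneg_left (K.le_opNorm x) (norm_nonneg x)
    _ = ‖K‖ := by rw [Set.mem_setOf_eq.mp hx]; ring
  set lam : ℝ := sSup A with hlam
  have hlam_mem_ge : h / ‖w‖ ^ 2 ≤ lam := by
    refine le_csSup hAbdd ?_
    rw [← hwhat]
    exact hmemA _ (by
      rw [norm_smul]; simp [abs_of_pos (inv_pos.mpr hwn), inv_mul_cancel₀ hwn.ne'])
  have hlam_pos : 0 < lam := lt_of_lt_of_le (by positivity) hlam_mem_ge
  have key : ∀ x : H, ⟪x, K x⟫ ≤ lam * ‖x‖ ^ 2 := by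
    intro x
    rcases eq_or_ne x 0 with rfl | hx0
    · simp
    · have hxn : (0:ℝ) < ‖x‖ := norm_pos_iff.mpr hx0
      have : ⟪(‖x‖⁻¹ • x), K (‖x‖⁻¹ • x)⟫ ≤ lam := le_csSup hAbdd (hmemA _ (by
        rw [norm_smul]; simp [abs_of_pos (inv_pos.mpr hxn), inv_mul_cancel₀ hxn.ne']))
      rw [map_smul, real_inner_smul_left, real_inner_smul_right] at this
      have h2 : ⟪x, K x⟫ ≤ lam * (‖x‖ * ‖x‖) := by
        have := mul_le_mul_of_nonneg_left this (le_of_lt (mul_pos hxn hxn))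
        calc ⟪x, K x⟫ = (‖x‖ * ‖x‖) * (‖x‖⁻¹ * (‖x‖⁻¹ * ⟪x, K x⟫)) := by
              field_simp
          _ ≤ (‖x‖ * ‖x‖) * lam := this
          _ = lam * (‖x‖ * ‖x‖) := by ring
      calc ⟪x, K x⟫ ≤ lam * (‖x‖ * ‖x‖) := h2
        _ = lam * ‖x‖ ^ 2 := by ring
  -- the operator S = lam • id - K is positive symmetric
  set S : H →L[ℝ] H := lam • ContinuousLinearMap.id ℝ H - K with hS
  have hSapp : ∀ x : H, S x = lam • x - K x := fun x => rfl
  have hsymS : ∀ x y : H, ⟪S x, y⟫ = ⟪x, S y⟫ := by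
    intro x y
    simp only [hSapp, inner_sub_left, inner_sub_right, real_inner_smul_left,
      real_inner_smul_right, hsymK]
  have hposS : ∀ x : H, 0 ≤ ⟪x, S x⟫ := by
    intro x
    simp only [hSapp, inner_sub_right, real_inner_smul_right, real_inner_self_eq_norm_sq]
    nlinarith [key x]
  -- minimizing sequence on the sphere
  obtain ⟨u, -, hu_tendsto, hu_mem⟩ := exists_seq_tendsto_sSup hAne hAbdd
  choose v hv1 hv2 using hu_mem
  have hvS : ∀ n, ⟪v n, S (v n)⟫ = lam - u n := by
    intro n
    have hn1 : ‖v n‖ = 1 := hv1 n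
    simp only [hSapp, inner_sub_right, real_inner_smul_right, real_inner_self_eq_norm_sq,
      hn1, hv2 n]
    ring
  -- ‖S x‖ ^ 2 ≤ ‖S‖ * ⟪x, S x⟫
  have hSnorm : ∀ x : H, ‖S x‖ ^ 2 ≤ ‖S‖ * ⟪x, S x⟫ := by
    intro x
    have hcs := gen_cs S hsymS hposS x (S x)
    have h1 : ⟪x, S (S x)⟫ = ‖S x‖ ^ 2 := by
      rw [← hsymS, real_inner_self_eq_norm_sq]
    have h2 : ⟪S x, S (S x)⟫ ≤ ‖S‖ * ‖S x‖ ^ 2 := by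
      calc ⟪S x, S (S x)⟫ ≤ ‖S x‖ * ‖S (S x)‖ := real_inner_le_norm _ _
        _ ≤ ‖S x‖ * (‖S‖ * ‖S x‖) :=
            mul_le_mul_of_nonneg_left (S.le_opNorm (S x)) (norm_nonneg _)
        _ = ‖S‖ * ‖S x‖ ^ 2 := by ring
    rw [h1] at hcs
    rcases eq_or_lt_of_le (norm_nonneg (S x)) with hz | hz
    · rw [← hz]
      simpa using mul_nonneg (norm_nonneg S) (hposS x)
    · nlinarith [hcs, mul_le_mul_of_nonneg_left h2 (hposS x), hposS x, hz,
        mul_pos hz hz, sq_nonneg (‖S x‖)]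
  -- S (v n) → 0
  have hSv0 : Filter.Tendsto (fun n => S (v n)) Filter.atTop (nhds 0) := by
    rw [tendsto_zero_iff_norm_tendsto_zero]
    have hbound : ∀ n, ‖S (v n)‖ ≤ Real.sqrt (‖S‖ * (lam - u n)) := by
      intro n
      rw [show ‖S (v n)‖ = Real.sqrt (‖S (v n)‖ ^ 2) by
        rw [Real.sqrt_sq (norm_nonneg _)]]
      exact Real.sqrt_le_sqrt (by rw [← hvS n]; exact hSnorm _)
    have hg : Filter.Tendsto (fun n => Real.sqrt (‖S‖ * (lam - u n)))
        Filter.atTop (nhds 0) := by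
      have hlim : Filter.Tendsto (fun n => ‖S‖ * (lam - u n)) Filter.atTop (nhds 0) := by
        have h0 := (tendsto_const_nhds (x := lam)).sub hu_tendsto
        simpa [hlam] using h0.const_mul ‖S‖
      exact (Real.continuous_sqrt.tendsto' 0 0 Real.sqrt_zero).comp hlim
    exact squeeze_zero (fun n => norm_nonneg _) hbound hg
  -- extract convergent subsequence of K (v n)
  obtain ⟨M, hMcomp, hMsub⟩ := hKc.image_closedBall_subset_compact (𝕜₁ := ℝ) 1
  have hKvM : ∀ n, K (v n) ∈ M := fun n =>
    hMsub ⟨v n, by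
      rw [Metric.mem_closedBall, dist_zero_right]
      exact le_of_eq (hv1 n), rfl⟩
  obtain ⟨y, -, φ, hφ, hKy⟩ := hMcomp.tendsto_subseq hKvM
  -- v (φ n) → e := lam⁻¹ • y
  have hlamv : Filter.Tendsto (fun n => lam • v (φ n)) Filter.atTop (nhds y) := by
    have h1 : Filter.Tendsto (fun n => S (v (φ n))) Filter.atTop (nhds 0) :=
      hSv0.comp hφ.tendsto_atTop
    have := h1.add hKy
    simpa [hSapp, sub_add_cancel] using this
  set e : H := lam⁻¹ • y with he
  have hve : Filter.Tendsto (fun n => v (φ n)) Filter.atTop (nhds e) := by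
    have := hlamv.const_smul lam⁻¹
    simpa [smul_smul, inv_mul_cancel₀ hlam_pos.ne'] using this
  have hene : ‖e‖ = 1 := by
    have h1 : Filter.Tendsto (fun n => ‖v (φ n)‖) Filter.atTop (nhds ‖e‖) :=
      hve.norm
    have h2 : Filter.Tendsto (fun n => ‖v (φ n)‖) Filter.atTop (nhds 1) := by
      have hfe : (fun n => ‖v (φ n)‖) = fun _ => (1:ℝ) := funext fun n => hv1 (φ n)
      rw [hfe]
      exact tendsto_const_nhds
    exact tendsto_nhds_unique h1 h2
  have hKe : K e = lam • e := by
    have h1 : Filter.Tendsto (fun n => K (v (φ n))) Filter.atTop (nhds (K e)) :=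
      (K.continuous.tendsto e).comp hve
    have h2 : K e = y := tendsto_nhds_unique h1 hKy
    rw [h2, he, smul_smul, mul_inv_cancel₀ hlam_pos.ne', one_smul]
  have heKe : ⟪e, K e⟫ = lam := by
    rw [hKe, real_inner_smul_right, real_inner_self_eq_norm_sq, hene]
    ring
  -- the minimiser
  refine ⟨Real.sqrt (h / lam) • e, ?_, ?_⟩
  · rw [map_smul, real_inner_smul_left, real_inner_smul_right, heKe,
      ← mul_assoc, ← Real.sqrt_mul_self (by positivity : (0:ℝ) ≤ h / lam)]
    field_simp
    rw [Real.sq_sqrt (Real.sqrt_nonneg _), ← div_pow, Real.sqrt_sq (by positivity)]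
    field_simp
  · intro z hz
    have hx0norm : ‖Real.sqrt (h / lam) • e‖ ^ 2 = h / lam := by
      rw [norm_smul, hene, mul_one, Real.norm_eq_abs,
        abs_of_nonneg (Real.sqrt_nonneg _), Real.sq_sqrt (by positivity)]
    rw [hx0norm]
    have := key z
    rw [hz] at this
    rw [div_le_iff₀ hlam_pos]
    linarith

/-- Existence of a global minimiser of the energy `E(x) = ‖x‖²` in every nonempty
helicity class `{x | ⟪x, K x⟫ = h}`, where `K` is a compact self-adjoint operator
on a real Hilbert space. -/
theorem energy_minimiser_exists {H : Type*} [NormedAddCommGroup H] [InnerProductSpace ℝ H]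
    [CompleteSpace H] (K : H →L[ℝ] H) (hK : IsSelfAdjoint K) (hKc : IsCompactOperator K)
    (h : ℝ) (hne : ∃ x : H, ⟪x, K x⟫ = h) :
    ∃ x₀ : H, ⟪x₀, K x₀⟫ = h ∧ ∀ y : H, ⟪y, K y⟫ = h → ‖x₀‖ ^ 2 ≤ ‖y‖ ^ 2 := by
  rcases lt_trichotomy h 0 with hneg | rfl | hpos
  · -- negative case: apply the positive case to -K
    have hKneg : IsSelfAdjoint (-K) := hK.neg
    have hKcneg : IsCompactOperator (⇑(-K)) := by
      simpa using hKc.neg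
    have hne' : ∃ x : H, ⟪x, (-K) x⟫ = -h := by
      obtain ⟨x, hx⟩ := hne
      exact ⟨x, by simp [inner_neg_right, hx]⟩
    obtain ⟨x₀, hx₀, hmin⟩ := aux_pos (-K) hKneg hKcneg (-h) (by linarith) hne'
    refine ⟨x₀, ?_, ?_⟩
    · have : -⟪x₀, K x₀⟫ = -h := by simpa [inner_neg_right] using hx₀
      linarith
    · intro y hy
      exact hmin y (by simp [inner_neg_right, hy])
  · exact ⟨0, by simp, fun y _ => by simp [sq_nonneg]⟩
  · exact aux_pos K hK hKc h hpos hne
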